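/- The n-fold anchor Υ : K^n_{(t,s)} → (Finset (Fin n) → K) is bijective if and only if (t,s) is regular, i.e. if and only if t i - s i is a unit of K for every i : Fin n. -/

import Mathlib

open MvPolynomial

/-- The defining ideal of the `n`-th order tangent algebra `K^n_{(t,s)}`. -/
noncomputable abbrev tangentIdeal (K : Type*) [CommRing K] {n : ℕ} (t s : Fin n → K) :
    Ideal (MvPolynomial (Fin n) K) :=
  Ideal.span (Set.range fun i : Fin n => (X i - C (t i)) * (X i - C (s i)))

/-- The `n`-th order tangent algebra `K^n_{(t,s)}`. -/
abbrev TangentAlgebra (K : Type*) [CommRing K] {n : ℕ} (t s : Fin n → K) :=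
  MvPolynomial (Fin n) K ⧸ tangentIdeal K t s

section Aux

variable {K : Type*} [CommRing K] {n : ℕ} (t s u : Fin n → K)

/-- Quasi-idempotent associated to `B`. -/
noncomputable def tangPB (B : Finset (Fin n)) : MvPolynomial (Fin n) K :=
  (∏ i ∈ B, (C (u i) * (X i - C (s i)))) * ∏ i ∈ Bᶜ, (C (u i) * (C (t i) - X i))

lemma tangPB_sum (hu : ∀ i, (t i - s i) * u i = 1) :
    ∑ B : Finset (Fin n), tangPB t s u B = 1 := by
  have h := Finset.prod_add (fun i => C (u i) * (X i - C (s i)))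
    (fun i => C (u i) * (C (t i) - X i)) (Finset.univ : Finset (Fin n))
  rw [Finset.powerset_univ] at h
  have h1 : ∏ i : Fin n,
      ((C (u i) * (X i - C (s i))) + (C (u i) * (C (t i) - X i))) = (1 : MvPolynomial (Fin n) K) := by
    apply Finset.prod_eq_one
    intro i _
    calc C (u i) * (X i - C (s i)) + C (u i) * (C (t i) - X i)
        = C (u i) * (C (t i) - C (s i)) := by ring
      _ = C (u i * (t i - s i)) := by rw [← C_sub, ← C_mul]
      _ = 1 := by rw [mul_comm, hu i, C_1]
  rw [h1] at h
  rw [h]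
  apply Finset.sum_congr rfl
  intro B _
  rw [tangPB, Finset.compl_eq_univ_sdiff]

lemma tangPB_eigen (B : Finset (Fin n)) (i : Fin n) :
    (X i - C (if i ∈ B then t i else s i)) * tangPB t s u B ∈ tangentIdeal K t s := by
  have hgen : (X i - C (t i)) * (X i - C (s i)) ∈ tangentIdeal K t s :=
    Ideal.subset_span ⟨i, rfl⟩
  by_cases hi : i ∈ B
  · rw [if_pos hi]
    have hdvd : (X i - C (s i)) ∣ tangPB t s u B := by
      refine Dvd.dvd.mul_right (Dvd.dvd.trans ?_ (Finset.dvd_prod_of_mem _ hi)) _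
      exact dvd_mul_left _ _
    obtain ⟨r, hr⟩ := hdvd
    have : (X i - C (t i)) * tangPB t s u B
        = ((X i - C (t i)) * (X i - C (s i))) * r := by rw [hr]; ring
    rw [this]
    exact Ideal.mul_mem_right _ _ hgen
  · rw [if_neg hi]
    have hdvd : (C (t i) - X i) ∣ tangPB t s u B := by
      refine Dvd.dvd.mul_left (Dvd.dvd.trans ?_
        (Finset.dvd_prod_of_mem _ (Finset.mem_compl.mpr hi))) _
      exact dvd_mul_left _ _
    obtain ⟨r, hr⟩ := hdvd
    have : (X i - C (s i)) * tangPB t s u B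
        = ((X i - C (t i)) * (X i - C (s i))) * (-r) := by rw [hr]; ring
    rw [this]
    exact Ideal.mul_mem_right _ _ hgen

lemma tangPB_mul (P : MvPolynomial (Fin n) K) (B : Finset (Fin n)) :
    (P - C (aeval (fun i => if i ∈ B then t i else s i) P)) * tangPB t s u B
      ∈ tangentIdeal K t s := by
  induction P using MvPolynomial.induction_on with
  | C a => simp
  | add p q hp hq =>
    rw [map_add, C_add]
    have : (p + q - (C (aeval (fun i => if i ∈ B then t i else s i) p)
          + C (aeval (fun i => if i ∈ B then t i else s i) q))) * tangPB t s u B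
        = (p - C (aeval (fun i => if i ∈ B then t i else s i) p)) * tangPB t s u B
          + (q - C (aeval (fun i => if i ∈ B then t i else s i) q)) * tangPB t s u B := by
      ring
    rw [this]
    exact Ideal.add_mem _ hp hq
  | mul_X p i hp =>
    rw [map_mul, aeval_X, C_mul]
    have key : (p * X i - C (aeval (fun i => if i ∈ B then t i else s i) p)
          * C (if i ∈ B then t i else s i)) * tangPB t s u B
        = X i * ((p - C (aeval (fun i => if i ∈ B then t i else s i) p)) * tangPB t s u B)
          + C (aeval (fun i => if i ∈ B then t i else s i) p)
            * ((X i - C (if i ∈ B then t i else s i)) * tangPB t s u B) := by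
      ring
    rw [key]
    exact Ideal.add_mem _ (Ideal.mul_mem_left _ _ hp)
      (Ideal.mul_mem_left _ _ (tangPB_eigen t s u B i))

lemma tangPB_aeval (hu : ∀ i, (t i - s i) * u i = 1) (B B' : Finset (Fin n)) :
    aeval (fun i => if i ∈ B' then t i else s i) (tangPB t s u B)
      = if B = B' then 1 else 0 := by
  rw [tangPB, map_mul, map_prod, map_prod]
  by_cases h : B = B'
  · subst h
    rw [if_pos rfl]
    rw [Finset.prod_eq_one, Finset.prod_eq_one, one_mul]
    · intro i hi
      have hi' : i ∉ B := Finset.mem_compl.mp hi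
      simp only [map_mul, map_sub, aeval_C, aeval_X, Algebra.algebraMap_self, RingHom.id_apply,
        if_neg hi']
      rw [mul_comm]; exact hu i
    · intro i hi
      simp only [map_mul, map_sub, aeval_C, aeval_X, Algebra.algebraMap_self, RingHom.id_apply,
        if_pos hi]
      rw [mul_comm]; exact hu i
  · rw [if_neg h]
    by_cases hsub : ∃ i ∈ B, i ∉ B'
    · obtain ⟨i, hi, hi'⟩ := hsub
      rw [Finset.prod_eq_zero hi, zero_mul]
      simp [hi']
    · push_neg at hsub
      obtain ⟨i, hi', hi⟩ : ∃ i ∈ B', i ∉ B := by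
        by_contra hc
        push_neg at hc
        exact h (Finset.Subset.antisymm hsub hc)
      rw [Finset.prod_eq_zero (Finset.mem_compl.mpr hi), mul_zero]
      simp [hi']

end Aux

/-- The `n`-fold anchor `Υ : K^n_{(t,s)} → (Finset (Fin n) → K)` is bijective if and
only if `(t,s)` is regular, i.e. `t i - s i` is a unit of `K` for every `i`. -/
theorem anchor_bijective_iff_regular (K : Type*) [CommRing K] (n : ℕ) (t s : Fin n → K)
    (Υ : TangentAlgebra K t s →ₐ[K] (Finset (Fin n) → K))
    (hΥ : ∀ (P : MvPolynomial (Fin n) K) (B : Finset (Fin n)),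
      Υ (Ideal.Quotient.mk (tangentIdeal K t s) P) B =
        aeval (fun i => if i ∈ B then t i else s i) P) :
    Function.Bijective Υ ↔ ∀ i : Fin n, IsUnit (t i - s i) := by
  constructor
  · intro hbij i
    obtain ⟨x, hx⟩ := hbij.2 (fun B => if i ∈ B then (1 : K) else 0)
    obtain ⟨P, rfl⟩ := Ideal.Quotient.mk_surjective x
    set q : Polynomial K :=
      aeval (fun j => if j = i then Polynomial.X else Polynomial.C (s j)) P with hq
    have heval : ∀ a : K, Polynomial.eval a q
        = aeval (fun j => if j = i then a else s j) P := by
      intro a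
      have hcomp : (Polynomial.aeval a).comp
          (aeval fun j => if j = i then Polynomial.X else Polynomial.C (s j))
          = (aeval (fun j => if j = i then a else s j) :
              MvPolynomial (Fin n) K →ₐ[K] K) := by
        rw [comp_aeval]
        congr 1
        funext j
        by_cases hj : j = i <;> simp [hj]
      have := DFunLike.congr_fun hcomp P
      simpa [hq, Polynomial.coe_aeval_eq_eval] using this
    have h1 : Polynomial.eval (t i) q = 1 := by
      have hxi := congrFun hx ({i} : Finset (Fin n))
      rw [hΥ P {i}] at hxi
      rw [heval]
      have hfun : (fun j => if j = i then t i else s j)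
          = (fun j => if j ∈ ({i} : Finset (Fin n)) then t j else s j) := by
        funext j
        by_cases hj : j = i <;> simp [hj]
      rw [hfun, hxi]
      simp
    have h0 : Polynomial.eval (s i) q = 0 := by
      have hxi := congrFun hx (∅ : Finset (Fin n))
      rw [hΥ P ∅] at hxi
      rw [heval]
      have hfun : (fun j => if j = i then s i else s j)
          = (fun j => if j ∈ (∅ : Finset (Fin n)) then t j else s j) := by
        funext j
        by_cases hj : j = i <;> simp [hj]
      rw [hfun, hxi]
      simp
    have hdvd := Polynomial.sub_dvd_eval_sub (t i) (s i) q
    rw [h1, h0, sub_zero] at hdvd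
    exact isUnit_of_dvd_one hdvd
  · intro hreg
    have hu' : ∀ i, ∃ v, (t i - s i) * v = 1 := fun i => (hreg i).exists_right_inv
    choose u hu using hu'
    constructor
    · rw [injective_iff_map_eq_zero]
      intro x hx
      obtain ⟨P, rfl⟩ := Ideal.Quotient.mk_surjective x
      have key : ∀ B : Finset (Fin n),
          aeval (fun i => if i ∈ B then t i else s i) P = 0 := by
        intro B
        rw [← hΥ P B, hx]
        rfl
      have hrw : Ideal.Quotient.mk (tangentIdeal K t s) P
          = Ideal.Quotient.mk (tangentIdeal K t s)
              (∑ B : Finset (Fin n), P * tangPB t s u B) := by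
        rw [← Finset.mul_sum, tangPB_sum t s u hu, mul_one]
      rw [hrw, map_sum]
      refine Finset.sum_eq_zero fun B _ => ?_
      rw [Ideal.Quotient.eq_zero_iff_mem]
      have := tangPB_mul t s u P B
      rwa [key B, map_zero, sub_zero] at this
    · intro g
      refine ⟨Ideal.Quotient.mk (tangentIdeal K t s)
        (∑ B : Finset (Fin n), C (g B) * tangPB t s u B), ?_⟩
      funext B'
      rw [hΥ, map_sum]
      simp only [map_mul, aeval_C, Algebra.algebraMap_self, RingHom.id_apply,
        tangPB_aeval t s u hu, mul_ite, mul_one, mul_zero]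
      simp
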